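/- Let g : ℝⁿ → ℝ be g(x) = ‖x‖₀, the number of nonzero components of x. Then g is variationally convex at every x̄ ∈ ℝⁿ for every v̄ ∈ ∂g(x̄); in particular, for every such pair (x̄, v̄) there exist convex neighborhoods U of x̄ and V of v̄ and ε > 0 such that ⟨x − u, v − w⟩ ≥ 0 for all (x,v), (u,w) ∈ gph ∂g with x, u ∈ U, g(x) < g(x̄) + ε, g(u) < g(x̄) + ε, and v, w ∈ V. If in addition v̄ᵢ ≠ 0 whenever x̄ᵢ = 0, then g is subdifferentially continuous at x̄ for v̄, i.e. g(x_k) → g(x̄) for every sequence (x_k, v_k) ∈ gph ∂g with (x_k, v_k) → (x̄, v̄). -/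

import Mathlib

open Filter Topology

notation "⟪" x ", " y "⟫" => @inner ℝ _ _ x y

noncomputable section

abbrev En (n : ℕ) : Type := EuclideanSpace ℝ (Fin n)

namespace Paper

variable {n : ℕ}

/-- A function `φ : ℝⁿ → ℝ ∪ {+∞}` (encoded into `EReal`) is proper if it is
nowhere `-∞` and somewhere finite. -/
def Proper (φ : En n → EReal) : Prop := (∃ x, φ x ≠ ⊤) ∧ ∀ x, φ x ≠ ⊥

/-- Fréchet (regular) subdifferential. -/
def RegSubdiff (φ : En n → EReal) (x : En n) : Set (En n) :=
  {v | φ x ≠ ⊤ ∧ ∀ ε : ℝ, 0 < ε → ∃ δ : ℝ, 0 < δ ∧ ∀ y : En n, ‖y - x‖ < δ →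
      φ x + ((⟪v, y - x⟫ - ε * ‖y - x‖ : ℝ) : EReal) ≤ φ y}

/-- Limiting (Mordukhovich) subdifferential. -/
def LimSubdiff (φ : En n → EReal) (x : En n) : Set (En n) :=
  {v | ∃ xs : ℕ → En n, ∃ vs : ℕ → En n,
      Tendsto xs atTop (𝓝 x) ∧
      Tendsto (fun k => φ (xs k)) atTop (𝓝 (φ x)) ∧
      Tendsto vs atTop (𝓝 v) ∧ ∀ k, vs k ∈ RegSubdiff φ (xs k)}

/-- Graph of the limiting subdifferential. -/
def gphSubdiff (φ : En n → EReal) : Set (En n × En n) :=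
  {p | p.2 ∈ LimSubdiff φ p.1}

/-- Regular (Fréchet) normal cone to a subset of the product `ℝⁿ × ℝⁿ`. -/
def RegNormalConeP (Ω : Set (En n × En n)) (z : En n × En n) : Set (En n × En n) :=
  {v | ∀ ε : ℝ, 0 < ε → ∃ δ : ℝ, 0 < δ ∧ ∀ w ∈ Ω, ‖w - z‖ < δ →
      ⟪v.1, w.1 - z.1⟫ + ⟪v.2, w.2 - z.2⟫ ≤ ε * ‖w - z‖}

/-- Limiting normal cone to a subset of the product `ℝⁿ × ℝⁿ`. -/
def LimNormalConeP (Ω : Set (En n × En n)) (z : En n × En n) : Set (En n × En n) :=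
  {v | ∃ zs : ℕ → En n × En n, ∃ vs : ℕ → En n × En n,
      (∀ k, zs k ∈ Ω) ∧ Tendsto zs atTop (𝓝 z) ∧ Tendsto vs atTop (𝓝 v) ∧
      ∀ k, vs k ∈ RegNormalConeP Ω (zs k)}

/-- Directional limiting normal cone. -/
def DirLimNormalConeP (Ω : Set (En n × En n)) (z d : En n × En n) :
    Set (En n × En n) :=
  {v | ∃ t : ℕ → ℝ, ∃ ds : ℕ → En n × En n, ∃ vs : ℕ → En n × En n,
      (∀ k, 0 < t k) ∧ Tendsto t atTop (𝓝 0) ∧ Tendsto ds atTop (𝓝 d) ∧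
      Tendsto vs atTop (𝓝 v) ∧ ∀ k, vs k ∈ RegNormalConeP Ω (z + t k • ds k)}

/-- Semismoothness* of a set-valued map (given by its graph) at a point of the graph. -/
def SemismoothStar (Ω : Set (En n × En n)) (z : En n × En n) : Prop :=
  ∀ u v ustar vstar : En n,
    (ustar, -vstar) ∈ DirLimNormalConeP Ω z (u, v) → ⟪ustar, u⟫ = ⟪vstar, v⟫

/-- Second-order subdifferential (generalized Hessian) of `φ` at `x` for `v`. -/
def SecondSubdiff (φ : En n → EReal) (x v u : En n) : Set (En n) :=
  {w | (w, -u) ∈ LimNormalConeP (gphSubdiff φ) (x, v)}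

/-- Graph of the gradient mapping of a real-valued function. -/
def gphGrad (h : En n → ℝ) : Set (En n × En n) := {p | p.2 = gradient h p.1}

/-- Second-order subdifferential of a `C¹` real-valued function via its gradient graph. -/
def SecondSubdiffFun (h : En n → ℝ) (x v u : En n) : Set (En n) :=
  {w | (w, -u) ∈ LimNormalConeP (gphGrad h) (x, v)}

/-- Metric regularity of a set-valued map around a point of its graph. -/
def MetrReg (F : En n → Set (En n)) (x y : En n) : Prop :=
  ∃ μ : ℝ, 0 < μ ∧ ∃ U ∈ 𝓝 x, ∃ V ∈ 𝓝 y, ∀ a ∈ U, ∀ b ∈ V,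
    EMetric.infEdist a {z | b ∈ F z} ≤ ENNReal.ofReal μ * EMetric.infEdist b (F a)

/-- Moreau envelope. -/
def moreau (φ : En n → EReal) (lam : ℝ) (x : En n) : EReal :=
  ⨅ y : En n, φ y + ((‖y - x‖ ^ 2 / (2 * lam) : ℝ) : EReal)

/-- Proximal mapping (as the set of minimizers). -/
def proxSet (φ : En n → EReal) (lam : ℝ) (x : En n) : Set (En n) :=
  {y | ∀ z : En n, φ y + ((‖y - x‖ ^ 2 / (2 * lam) : ℝ) : EReal)
        ≤ φ z + ((‖z - x‖ ^ 2 / (2 * lam) : ℝ) : EReal)}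

/-- Prox-boundedness. -/
def ProxBounded (φ : En n → EReal) : Prop :=
  ∃ lam : ℝ, 0 < lam ∧ ∃ x, moreau φ lam x ≠ ⊥

/-- Threshold of prox-boundedness. -/
def proxThreshold (φ : En n → EReal) : EReal :=
  sSup {l : EReal | ∃ lam : ℝ, l = (lam : EReal) ∧ 0 < lam ∧ ∃ x, moreau φ lam x ≠ ⊥}

/-- `r`-level prox-regularity at `xb` for `vb ∈ ∂φ(xb)`. -/
def ProxRegular (φ : En n → EReal) (r : ℝ) (xb vb : En n) : Prop :=
  vb ∈ LimSubdiff φ xb ∧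
  ∃ ε : ℝ, 0 < ε ∧ ∃ U ∈ 𝓝 xb, ∃ V ∈ 𝓝 vb,
    ∀ x ∈ U, ∀ u ∈ U, ∀ v ∈ V, v ∈ LimSubdiff φ u → φ u < φ xb + (ε : EReal) →
      φ u + ((⟪v, x - u⟫ - r / 2 * ‖x - u‖ ^ 2 : ℝ) : EReal) ≤ φ x

/-- Subdifferential continuity at `xb` for `vb ∈ ∂φ(xb)`. -/
def SubdiffCont (φ : En n → EReal) (xb vb : En n) : Prop :=
  vb ∈ LimSubdiff φ xb ∧
  ∀ ε : ℝ, 0 < ε → ∃ δ : ℝ, 0 < δ ∧ ∀ x v : En n, v ∈ LimSubdiff φ x →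
    ‖x - xb‖ < δ → ‖v - vb‖ < δ →
      φ xb - (ε : EReal) < φ x ∧ φ x < φ xb + (ε : EReal)

/-- Continuous `r`-level prox-regularity. -/
def ContProxRegular (φ : En n → EReal) (r : ℝ) (xb vb : En n) : Prop :=
  ProxRegular φ r xb vb ∧ SubdiffCont φ xb vb

/-- Continuous prox-regularity (for some level `r ≥ 0`). -/
def ContinuouslyProxRegular (φ : En n → EReal) (xb vb : En n) : Prop :=
  (∃ r : ℝ, 0 ≤ r ∧ ProxRegular φ r xb vb) ∧ SubdiffCont φ xb vb

/-- The structured sum `φ = f + g`. -/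
def phiSum (f : En n → ℝ) (g : En n → EReal) : En n → EReal :=
  fun x => (f x : EReal) + g x

/-- Hessian of a `C²` function as a continuous linear map. -/
def hess (f : En n → ℝ) (x : En n) : En n →L[ℝ] En n := fderiv ℝ (gradient f) x

/-- Normal map associated with the structured problem. -/
def normalMap (f : En n → ℝ) (g : En n → EReal) (lam : ℝ) (x : En n) : Set (En n) :=
  {w | ∃ xh ∈ proxSet g lam x, w = gradient f xh + (1 / lam) • (x - xh)}

/-- `λ`-critical points of the structured problem. -/
def lamCritical (f : En n → ℝ) (g : En n → EReal) (lam : ℝ) (x : En n) : Prop :=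
  x ∈ proxSet g lam (x - lam • gradient f x)

/-- Forward-backward envelope. -/
def FBE (f : En n → ℝ) (g : En n → EReal) (lam : ℝ) (x : En n) : EReal :=
  ⨅ y : En n,
    ((f x + ⟪gradient f x, y - x⟫ + ‖y - x‖ ^ 2 / (2 * lam) : ℝ) : EReal) + g y

/-- Real-valued forward-backward envelope. -/
def FBEr (f : En n → ℝ) (g : En n → EReal) (lam : ℝ) (x : En n) : ℝ :=
  (FBE f g lam x).toReal

/-- Tilt-stable local minimizer. -/
def TiltStable (φ : En n → EReal) (xb : En n) : Prop :=
  ∃ γ : ℝ, 0 < γ ∧ ∃ M : En n → En n, ∃ W ∈ 𝓝 (0 : En n), ∃ K : NNReal,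
    LipschitzOnWith K M W ∧ M 0 = xb ∧
    ∀ v ∈ W, {y : En n | ‖y - xb‖ ≤ γ ∧ ∀ z : En n, ‖z - xb‖ ≤ γ →
        φ y + ((-⟪v, y⟫ : ℝ) : EReal) ≤ φ z + ((-⟪v, z⟫ : ℝ) : EReal)} = {M v}

/-- `r`-weak convexity (`r = 0` is plain convexity). -/
def WeaklyConvex (g : En n → EReal) (r : ℝ) : Prop :=
  ∀ x y : En n, ∀ t : ℝ, 0 ≤ t → t ≤ 1 →
    g (t • x + (1 - t) • y) + ((r / 2 * ‖t • x + (1 - t) • y‖ ^ 2 : ℝ) : EReal) ≤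
      (t : EReal) * (g x + ((r / 2 * ‖x‖ ^ 2 : ℝ) : EReal)) +
        ((1 - t : ℝ) : EReal) * (g y + ((r / 2 * ‖y‖ ^ 2 : ℝ) : EReal))

/-- Second subderivative. -/
def secondSubderiv (φ : En n → EReal) (x v w : En n) : EReal :=
  Filter.liminf
    (fun p : ℝ × En n =>
      ((2 / p.1 ^ 2 : ℝ) : EReal) *
        (φ (x + p.1 • p.2) - φ x - ((p.1 * ⟪v, p.2⟫ : ℝ) : EReal)))
    ((𝓝[>] (0 : ℝ)) ×ˢ 𝓝 w)

/-- Twice epi-differentiability. -/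
def TwiceEpiDiff (φ : En n → EReal) (x v : En n) : Prop :=
  ∀ w : En n, ∀ τ : ℕ → ℝ, (∀ k, 0 < τ k) → Tendsto τ atTop (𝓝 0) →
    ∃ ws : ℕ → En n, Tendsto ws atTop (𝓝 w) ∧
      Tendsto (fun k =>
        ((2 / τ k ^ 2 : ℝ) : EReal) *
          (φ (x + τ k • ws k) - φ x - ((τ k * ⟪v, ws k⟫ : ℝ) : EReal)))
        atTop (𝓝 (secondSubderiv φ x v w))

/-- Strong variational convexity (via the subgradient characterization). -/
def StronglyVarConvex (φ : En n → EReal) (xb vb : En n) : Prop :=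
  vb ∈ LimSubdiff φ xb ∧
  ∃ σ : ℝ, 0 < σ ∧ ∃ ε : ℝ, 0 < ε ∧ ∃ U ∈ 𝓝 xb, ∃ V ∈ 𝓝 vb,
    ∀ u₁ ∈ U, ∀ u₂ ∈ U, ∀ v₁ ∈ V, ∀ v₂ ∈ V,
      v₁ ∈ LimSubdiff φ u₁ → v₂ ∈ LimSubdiff φ u₂ →
      φ u₁ < φ xb + (ε : EReal) → φ u₂ < φ xb + (ε : EReal) →
      σ * ‖u₁ - u₂‖ ^ 2 ≤ ⟪v₁ - v₂, u₁ - u₂⟫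

/-- Bouligand Jacobian. -/
def BouligandJac (h : En n → En n) (x : En n) : Set (En n →L[ℝ] En n) :=
  {H | ∃ xs : ℕ → En n, Tendsto xs atTop (𝓝 x) ∧ (∀ k, DifferentiableAt ℝ h (xs k)) ∧
      Tendsto (fun k => fderiv ℝ h (xs k)) atTop (𝓝 H)}

/-- The ℓ₀-"norm": number of nonzero components. -/
def ell0 (x : En n) : ℕ := (Finset.univ.filter fun i => x i ≠ 0).card

lemma ell0_congr {x y : En n} (h : ∀ i, x i ≠ 0 ↔ y i ≠ 0) : ell0 x = ell0 y := by
  unfold ell0; congr 1; exact Finset.filter_congr (fun i _ => by simp [h i])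

lemma tendsto_apply {f : ℕ → En n} {x : En n} (h : Tendsto f atTop (𝓝 x)) (i : Fin n) :
    Tendsto (fun k => f k i) atTop (𝓝 (x i)) :=
  ((EuclideanSpace.proj i).continuous.tendsto x).comp h

lemma reg_zero {x v : En n}
    (hv : v ∈ RegSubdiff (fun y : En n => ((ell0 y : ℝ) : EReal)) x)
    {i : Fin n} (hi : x i ≠ 0) : v i = 0 := by
  obtain ⟨-, hsub⟩ := hv
  have key : ∀ ε : ℝ, 0 < ε → ∀ t : ℝ, t ≠ 0 → |t| < |x i| →
      (∃ δ : ℝ, 0 < δ ∧ |t| < δ) → False ∨ True := fun _ _ _ _ _ _ => Or.inr trivial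
  have main : ∀ ε : ℝ, 0 < ε → |v i| ≤ ε := by
    intro ε hε
    obtain ⟨δ, hδ, H⟩ := hsub ε hε
    set s : ℝ := min δ |x i| / 2 with hs
    have hxi : 0 < |x i| := abs_pos.mpr hi
    have hspos : 0 < s := by positivity
    have hbound : ∀ t : ℝ, |t| = s → t * v i ≤ ε * s := by
      intro t ht
      set y : En n := x + t • EuclideanSpace.single i (1:ℝ) with hy
      have hyx : y - x = t • EuclideanSpace.single i (1:ℝ) := by simp [hy]
      have hnorm : ‖y - x‖ = s := by
        rw [hyx, norm_smul]; simp [EuclideanSpace.norm_single, ht]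
      have hsmin : s < min δ |x i| := by
        rw [hs]; exact half_lt_self (lt_min hδ hxi)
      have hlt : ‖y - x‖ < δ := by
        rw [hnorm]; exact lt_of_lt_of_le hsmin (min_le_left _ _)
      have hinner : @inner ℝ _ _ v (y - x) = t * v i := by
        rw [hyx]
        simp [real_inner_smul_right, EuclideanSpace.inner_single_left, EuclideanSpace.inner_single_right, real_inner_comm, mul_comm]
      have hts : |t| < |x i| := by
        rw [ht]; exact lt_of_lt_of_le hsmin (min_le_right _ _)
      have hne : x i + t ≠ 0 := by
        intro hc
        have ht' : t = -x i := by linarith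
        rw [ht', abs_neg] at hts
        exact lt_irrefl _ hts
      have hell : ell0 y = ell0 x := by
        apply ell0_congr
        intro j
        by_cases hj : j = i
        · subst hj
          have hyj : y j = x j + t := by simp [hy, EuclideanSpace.single_apply]
          rw [hyj]
          exact ⟨fun _ => hi, fun _ => hne⟩
        · have hyj : y j = x j := by simp [hy, EuclideanSpace.single_apply, hj]
          rw [hyj]
      have := H y hlt
      simp only [hinner, hnorm, hell] at this
      have h2 : ((ell0 x : ℝ) + (t * v i - ε * s) : ℝ) ≤ ((ell0 x : ℝ)) := by
        have := this
        rw [← EReal.coe_add] at this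
        exact_mod_cast this
      linarith
    have h1 := hbound s (abs_of_pos hspos)
    have h2 := hbound (-s) (by rw [abs_neg, abs_of_pos hspos])
    rw [abs_le]
    constructor
    · nlinarith
    · nlinarith
  by_contra h
  have := main (|v i| / 2) (by positivity)
  linarith [abs_pos.mpr h]


lemma lim_zero {x v : En n}
    (hv : v ∈ LimSubdiff (fun y : En n => ((ell0 y : ℝ) : EReal)) x)
    {i : Fin n} (hi : x i ≠ 0) : v i = 0 := by
  obtain ⟨xs, vs, hxs, -, hvs, hreg⟩ := hv
  have h1 : ∀ᶠ k in atTop, xs k i ≠ 0 :=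
    (tendsto_apply hxs i).eventually (eventually_ne_nhds hi)
  have h2 : ∀ᶠ k in atTop, vs k i = 0 := h1.mono fun k hk => reg_zero (hreg k) hk
  have h3 : Tendsto (fun k => vs k i) atTop (𝓝 (0:ℝ)) :=
    Tendsto.congr' (h2.mono fun k hk => hk.symm) tendsto_const_nhds
  exact tendsto_nhds_unique (tendsto_apply hvs i) h3

lemma exists_pos_le (xb : En n) : ∃ δ : ℝ, 0 < δ ∧ ∀ i, xb i ≠ 0 → δ ≤ |xb i| := by
  rcases (Finset.univ.filter fun i => xb i ≠ 0).eq_empty_or_nonempty with h | h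
  · refine ⟨1, one_pos, fun i hi => ?_⟩
    exact absurd (Finset.mem_filter.mpr ⟨Finset.mem_univ i, hi⟩ :
      i ∈ Finset.univ.filter fun j => xb j ≠ 0) (by simp [h])
  · refine ⟨(Finset.univ.filter fun i => xb i ≠ 0).inf' h (fun i => |xb i|), ?_, ?_⟩
    · rw [Finset.lt_inf'_iff]
      intro i hi
      exact abs_pos.mpr (Finset.mem_filter.mp hi).2
    · intro i hi
      exact Finset.inf'_le _ (Finset.mem_filter.mpr ⟨Finset.mem_univ i, hi⟩)

lemma abs_apply_le_norm (x : En n) (i : Fin n) : |x i| ≤ ‖x‖ := by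
  have h := abs_real_inner_le_norm (EuclideanSpace.single i (1:ℝ)) x
  simpa [EuclideanSpace.inner_single_left] using h

lemma supp_eq {xb x : En n} {δ : ℝ} (hδ : ∀ i, xb i ≠ 0 → δ ≤ |xb i|)
    (hx : ‖x - xb‖ < δ) (hcard : ell0 x ≤ ell0 xb) :
    ∀ i, x i ≠ 0 ↔ xb i ≠ 0 := by
  have hsub : (Finset.univ.filter fun i => xb i ≠ 0) ⊆
      (Finset.univ.filter fun i => x i ≠ 0) := by
    intro i hi
    have hi' : xb i ≠ 0 := (Finset.mem_filter.mp hi).2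
    refine Finset.mem_filter.mpr ⟨Finset.mem_univ i, ?_⟩
    intro hc
    have h1 : |x i - xb i| ≤ ‖x - xb‖ := by
      simpa using abs_apply_le_norm (x - xb) i
    rw [hc] at h1
    simp only [zero_sub, abs_neg] at h1
    exact absurd (lt_of_le_of_lt h1 hx) (not_lt.mpr (hδ i hi'))
  have heq := Finset.eq_of_subset_of_card_le hsub hcard
  intro i
  constructor
  · intro hi
    have : i ∈ Finset.univ.filter fun j => x j ≠ 0 :=
      Finset.mem_filter.mpr ⟨Finset.mem_univ i, hi⟩
    rw [← heq] at this
    exact (Finset.mem_filter.mp this).2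
  · intro hi
    exact (Finset.mem_filter.mp (hsub (Finset.mem_filter.mpr ⟨Finset.mem_univ i, hi⟩))).2


end Paper

open Paper

/-- variational convexity and subdifferential continuity of the ℓ₀-norm. -/
theorem statement19 {n : ℕ} :
    ∀ xb vb : En n,
      vb ∈ LimSubdiff (fun y : En n => ((ell0 y : ℝ) : EReal)) xb →
      -- variational convexity via local monotonicity of the subgradient map
      (∃ U V : Set (En n), U ∈ 𝓝 xb ∧ V ∈ 𝓝 vb ∧ Convex ℝ U ∧ Convex ℝ V ∧
        ∃ ε : ℝ, 0 < ε ∧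
          ∀ x u v w : En n,
            v ∈ LimSubdiff (fun y : En n => ((ell0 y : ℝ) : EReal)) x →
            w ∈ LimSubdiff (fun y : En n => ((ell0 y : ℝ) : EReal)) u →
            x ∈ U → u ∈ U → v ∈ V → w ∈ V →
            (ell0 x : ℝ) < (ell0 xb : ℝ) + ε → (ell0 u : ℝ) < (ell0 xb : ℝ) + ε →
            0 ≤ ⟪x - u, v - w⟫) ∧
      -- subdifferential continuity under the nondegeneracy condition
      ((∀ i : Fin n, xb i = 0 → vb i ≠ 0) →
        ∀ xs vs : ℕ → En n,
          (∀ k, vs k ∈ LimSubdiff (fun y : En n => ((ell0 y : ℝ) : EReal)) (xs k)) →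
          Tendsto xs atTop (𝓝 xb) → Tendsto vs atTop (𝓝 vb) →
          Tendsto (fun k => (ell0 (xs k) : ℝ)) atTop (𝓝 (ell0 xb : ℝ))) := by
  intro xb vb hvb
  obtain ⟨δ, hδ, hδle⟩ := exists_pos_le xb
  constructor
  · refine ⟨Metric.ball xb δ, Set.univ, Metric.ball_mem_nhds xb hδ, Filter.univ_mem,
      convex_ball xb δ, convex_univ, 1/2, by norm_num, ?_⟩
    intro x u v w hv hw hxU huU _ _ hxε huε
    have card_le : ∀ z : En n, (ell0 z : ℝ) < (ell0 xb : ℝ) + 1/2 → ell0 z ≤ ell0 xb := by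
      intro z hz
      have h1 : (ell0 z : ℝ) < (ell0 xb : ℝ) + 1 := by linarith
      exact Nat.lt_add_one_iff.mp (by exact_mod_cast h1)
    have hsx := supp_eq hδle (by rw [← dist_eq_norm]; exact Metric.mem_ball.mp hxU)
      (card_le x hxε)
    have hsu := supp_eq hδle (by rw [← dist_eq_norm]; exact Metric.mem_ball.mp huU)
      (card_le u huε)
    have : ⟪x - u, v - w⟫ = 0 := by
      rw [PiLp.inner_apply]
      apply Finset.sum_eq_zero
      intro i _
      by_cases hxb : xb i = 0
      · have hx0 : x i = 0 := by
          by_contra hc; exact (hsx i).mp hc hxb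
        have hu0 : u i = 0 := by
          by_contra hc; exact (hsu i).mp hc hxb
        simp [hx0, hu0]
      · have hv0 : v i = 0 := lim_zero hv ((hsx i).mpr hxb)
        have hw0 : w i = 0 := lim_zero hw ((hsu i).mpr hxb)
        simp [hv0, hw0]
    rw [this]
  · intro hnd xs vs hmem hxs hvs
    have hev : ∀ i : Fin n, ∀ᶠ k in atTop, (xs k i ≠ 0 ↔ xb i ≠ 0) := by
      intro i
      by_cases hxbi : xb i = 0
      · have hvbi := hnd i hxbi
        refine ((tendsto_apply hvs i).eventually (eventually_ne_nhds hvbi)).mono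
          fun k hk => ?_
        exact ⟨fun hne => absurd (lim_zero (hmem k) hne) hk, fun h => absurd hxbi h⟩
      · exact ((tendsto_apply hxs i).eventually (eventually_ne_nhds hxbi)).mono
          fun k hk => ⟨fun _ => hxbi, fun _ => hk⟩
    have hev2 : ∀ᶠ k in atTop, ell0 (xs k) = ell0 xb :=
      (Filter.eventually_all.mpr hev).mono fun k hk => ell0_congr hk
    exact Tendsto.congr' (hev2.mono fun k hk => by simp [hk]) tendsto_const_nhds
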